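/- Let K be an algebraically closed field of characteristic zero and let B be an integrally closed integral domain which is a finitely generated K-algebra possessing a unit that does not lie in the image of K under the structure map. Then there exist an integer n ≥ 2 and a unit f of B such that the B-algebra B[T]/(Tⁿ − f) is an integral domain, is finite as a B-module, and is étale over B (of finite type and formally étale). -/

import Mathlib

set_option maxHeartbeats 1000000

open Polynomial

/-- In a UFD, `r ^ p = q * s ^ p` with `q` prime, `s ≠ 0`, `p ≥ 2` is impossible. -/
theorem no_pth_root_of_prime_mul {α : Type*} [CommMonoidWithZero α]
    [UniqueFactorizationMonoid α] {q r s : α} (hq : Prime q) (hs : s ≠ 0)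
    {p : ℕ} (hp : 2 ≤ p) (h : r ^ p = q * s ^ p) : False := by
  have hr : r ≠ 0 := by
    rintro rfl
    have : q * s ^ p = 0 := by rw [← h]; exact zero_pow (by omega)
    rcases mul_eq_zero.mp this with h' | h'
    · exact hq.ne_zero h'
    · exact pow_ne_zero _ hs h'
  have hfr : FiniteMultiplicity q r := FiniteMultiplicity.of_not_isUnit hq.not_unit hr
  have hfs : FiniteMultiplicity q s := FiniteMultiplicity.of_not_isUnit hq.not_unit hs
  have hfq : FiniteMultiplicity q q := FiniteMultiplicity.of_not_isUnit hq.not_unit hq.ne_zero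
  have e1 : emultiplicity q (r ^ p) = (p * multiplicity q r : ℕ) := by
    rw [emultiplicity_pow hq, hfr.emultiplicity_eq_multiplicity]; push_cast; ring
  have e2 : emultiplicity q (q * s ^ p) = (1 + p * multiplicity q s : ℕ) := by
    rw [emultiplicity_mul hq, emultiplicity_pow hq, hfs.emultiplicity_eq_multiplicity,
      hfq.emultiplicity_self]
    push_cast; ring
  rw [h, e2] at e1
  have e3 : (1 + p * multiplicity q s : ℕ) = (p * multiplicity q r : ℕ) := by exact_mod_cast e1
  have h0 : (p * multiplicity q r) % p = 0 := Nat.mul_mod_right _ _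
  rw [← e3, Nat.add_mul_mod_self_left, Nat.one_mod_eq_one.mpr (by omega)] at h0
  exact one_ne_zero h0

/-- Each variable is a prime element of a multivariate polynomial ring over a domain. -/
theorem mvPolynomial_prime_X {R : Type*} [CommRing R] [IsDomain R] {σ : Type*} (i : σ) :
    Prime (MvPolynomial.X i : MvPolynomial σ R) := by
  classical
  let e := (MvPolynomial.renameEquiv R (Equiv.optionSubtypeNe i).symm).trans
    (MvPolynomial.optionEquivLeft R {b : σ // b ≠ i})
  rw [← MulEquiv.prime_iff e]
  have he : e (MvPolynomial.X i) = Polynomial.X := by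
    simp [e, Equiv.optionSubtypeNe_symm_self, MvPolynomial.optionEquivLeft_X_none]
  show Prime (e (MvPolynomial.X i))
  rw [he]
  exact Polynomial.prime_X

/-- Formal étaleness of `B[T]/(h)` when the derivative of `h` is invertible at the root. -/
theorem formallyEtale_adjoinRoot {B : Type} [CommRing B] (h : B[X])
    (hu : IsUnit (aeval (AdjoinRoot.root h) (derivative h))) :
    Algebra.FormallyEtale B (AdjoinRoot h) := by
  rw [Algebra.FormallyEtale.iff_formallyUnramified_and_formallySmooth]
  constructor
  · rw [Algebra.FormallyUnramified.iff_comp_injective]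
    intro C _ _ I hI
    intro ψ₁ ψ₂ hψ
    apply AdjoinRoot.algHom_ext
    have hε : Ideal.Quotient.mk I (ψ₁ (AdjoinRoot.root h) - ψ₂ (AdjoinRoot.root h)) = 0 := by
      rw [map_sub, sub_eq_zero]
      have := congrArg (fun g : AdjoinRoot h →ₐ[B] C ⧸ I => g (AdjoinRoot.root h)) hψ
      simpa using this
    set ε := ψ₁ (AdjoinRoot.root h) - ψ₂ (AdjoinRoot.root h) with hεdef
    have hεI : ε ∈ I := Ideal.Quotient.eq_zero_iff_mem.mp hε
    have hε2 : ε ^ 2 = 0 := by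
      rw [← Ideal.mem_bot, ← hI]; exact Ideal.pow_mem_pow hεI 2
    have key : aeval (ψ₂ (AdjoinRoot.root h) + ε) h
        = aeval (ψ₂ (AdjoinRoot.root h)) h + aeval (ψ₂ (AdjoinRoot.root h)) (derivative h) * ε := by
      rw [← eval_map_algebraMap, ← eval_map_algebraMap, ← eval_map_algebraMap,
        Polynomial.eval_add_of_sq_eq_zero _ _ _ hε2, derivative_map]
    have hψ2root : ψ₂ (AdjoinRoot.root h) + ε = ψ₁ (AdjoinRoot.root h) := by
      rw [hεdef]; ring
    have h₁ : aeval (ψ₁ (AdjoinRoot.root h)) h = 0 := by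
      rw [aeval_algHom_apply, AdjoinRoot.aeval_eq, AdjoinRoot.mk_self, map_zero]
    have h₂ : aeval (ψ₂ (AdjoinRoot.root h)) h = 0 := by
      rw [aeval_algHom_apply, AdjoinRoot.aeval_eq, AdjoinRoot.mk_self, map_zero]
    rw [hψ2root, h₁, h₂, zero_add] at key
    have hunit : IsUnit (aeval (ψ₂ (AdjoinRoot.root h)) (derivative h)) := by
      rw [aeval_algHom_apply]; exact hu.map ψ₂
    have : ε = 0 := by
      obtain ⟨w, hw⟩ := hunit
      have := congrArg (fun t => (↑w⁻¹ : C) * t) key.symm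
      simpa [← hw, ← mul_assoc] using this
    rw [← hψ2root, this, add_zero]
  · apply Algebra.FormallySmooth.of_comp_surjective
    intro C _ _ I hI f
    obtain ⟨x₀, hx₀⟩ := Ideal.Quotient.mk_surjective (f (AdjoinRoot.root h))
    have ha : Ideal.Quotient.mk I (aeval x₀ h) = 0 := by
      have h1 := aeval_algHom_apply (Ideal.Quotient.mkₐ B I) x₀ h
      simp only [Ideal.Quotient.mkₐ_eq_mk] at h1
      rw [← h1, hx₀, aeval_algHom_apply, AdjoinRoot.aeval_eq, AdjoinRoot.mk_self, map_zero]
    have haI : aeval x₀ h ∈ I := Ideal.Quotient.eq_zero_iff_mem.mp ha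
    have hdq : IsUnit (Ideal.Quotient.mk I (aeval x₀ (derivative h))) := by
      have h1 := aeval_algHom_apply (Ideal.Quotient.mkₐ B I) x₀ (derivative h)
      simp only [Ideal.Quotient.mkₐ_eq_mk] at h1
      rw [← h1, hx₀, aeval_algHom_apply]
      exact hu.map f
    have hd : IsUnit (aeval x₀ (derivative h)) := by
      obtain ⟨e₀', he₀'⟩ := Ideal.Quotient.mk_surjective (↑hdq.unit⁻¹ : C ⧸ I)
      have hm : Ideal.Quotient.mk I (aeval x₀ (derivative h) * e₀' - 1) = 0 := by
        rw [map_sub, map_mul, map_one, he₀', IsUnit.mul_val_inv, sub_self]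
      set m := aeval x₀ (derivative h) * e₀' - 1 with hmdef
      have hmI : m ∈ I := Ideal.Quotient.eq_zero_iff_mem.mp hm
      have hm2 : m ^ 2 = 0 := by
        rw [← Ideal.mem_bot, ← hI]; exact Ideal.pow_mem_pow hmI 2
      have : IsUnit (aeval x₀ (derivative h) * e₀') := by
        have h2 : aeval x₀ (derivative h) * e₀' = 1 + m := by rw [hmdef]; ring
        rw [h2]
        refine IsUnit.of_mul_eq_one (1 - m) ?_
        have h3 : (1 + m) * (1 - m) = 1 - m ^ 2 := by ring
        rw [h3, hm2, sub_zero]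
      exact isUnit_of_mul_isUnit_left this
    obtain ⟨d, hdd⟩ := hd
    set ε := -(↑d⁻¹ * aeval x₀ h) with hεdef
    have hεI : ε ∈ I := by
      rw [hεdef]
      exact neg_mem (Ideal.mul_mem_left I _ haI)
    have hε2 : ε ^ 2 = 0 := by
      rw [← Ideal.mem_bot, ← hI]; exact Ideal.pow_mem_pow hεI 2
    have hroot : aeval (x₀ + ε) h = 0 := by
      rw [← eval_map_algebraMap, Polynomial.eval_add_of_sq_eq_zero _ _ _ hε2, derivative_map,
        eval_map_algebraMap, eval_map_algebraMap, hεdef]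
      rw [← hdd]
      have h4 : (d : C) * -(↑d⁻¹ * aeval x₀ h) = -((d * d⁻¹ : Cˣ) * aeval x₀ h) := by
        push_cast; ring
      rw [h4, mul_inv_cancel]
      simp
    refine ⟨AdjoinRoot.liftAlgHom h (Algebra.ofId B C) (x₀ + ε)
      (by rw [← hroot, aeval_def]; rfl), ?_⟩
    apply AdjoinRoot.algHom_ext
    rw [AlgHom.comp_apply, AdjoinRoot.liftAlgHom_root]
    have h5 : (Ideal.Quotient.mkₐ B I) (x₀ + ε) = Ideal.Quotient.mk I x₀ + Ideal.Quotient.mk I ε := by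
      simp
    rw [h5, Ideal.Quotient.eq_zero_iff_mem.mpr hεI, add_zero, hx₀]

/-- An integrally closed domain finitely generated over an algebraically closed field of
characteristic zero, with a nonconstant unit, admits a nontrivial connected finite étale
Kummer covering. -/
theorem exists_nontrivial_etale_cover_of_nonconstant_unit_charZero
    (K : Type) [Field K] [IsAlgClosed K] [CharZero K]
    (B : Type) [CommRing B] [IsDomain B] [IsIntegrallyClosed B]
    [Algebra K B] [Algebra.FiniteType K B]
    (hnc : ∃ u : Bˣ, ∀ c : K, algebraMap K B c ≠ (u : B)) :
    ∃ n : ℕ, 2 ≤ n ∧ ∃ f : Bˣ,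
      IsDomain (AdjoinRoot (X ^ n - C (f : B))) ∧
      Module.Finite B (AdjoinRoot (X ^ n - C (f : B))) ∧
      Algebra.FiniteType B (AdjoinRoot (X ^ n - C (f : B))) ∧
      Algebra.FormallyEtale B (AdjoinRoot (X ^ n - C (f : B))) := by
  classical
  obtain ⟨u, hu⟩ := hnc
  -- `u` is transcendental over `K`
  have huB : Transcendental K (u : B) := by
    rw [Transcendental]
    intro halg
    have hint : IsIntegral K (u : B) := halg.isIntegral
    have hdeg : (minpoly K (u : B)).degree = 1 :=
      IsAlgClosed.degree_eq_one_of_irreducible K (minpoly.irreducible hint)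
    obtain ⟨c, hc⟩ := minpoly.degree_eq_one_iff.mp hdeg
    exact hu c hc
  set F := FractionRing B with hFdef
  have hBF : Function.Injective (algebraMap B F) := IsFractionRing.injective B F
  set v : F := algebraMap B F (u : B) with hvdef
  have hvtr : Transcendental K v := by
    rw [Transcendental]
    intro halg
    exact huB ((isAlgebraic_algHom_iff (IsScalarTower.toAlgHom K B F) hBF).mp halg)
  have hv0 : v ≠ 0 := by
    rw [hvdef]
    exact fun h0 => u.ne_zero (hBF (by rwa [map_zero]))
  -- extend {v} to a transcendence basis
  have hsing : AlgebraicIndependent K ((↑) : ({v} : Set F) → F) := by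
    rw [algebraicIndependent_unique_type_iff]
    exact hvtr
  obtain ⟨S, hvS, hmax⟩ :=
    exists_maximal_algebraicIndependent ({v} : Set F) Set.univ (Set.subset_univ _) hsing
  have hbasis : IsTranscendenceBasis K ((↑) : S → F) := by
    refine ⟨hmax.1.1, fun t ht hst => ?_⟩
    simp only [Subtype.range_coe_subtype, Set.setOf_mem_eq] at *
    exact hmax.eq_of_le ⟨ht, Set.subset_univ _⟩ hst
  have hvmem : v ∈ S := hvS rfl
  set M := IntermediateField.adjoin K S with hMdef
  haveI halgMF : Algebra.IsAlgebraic M F := by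
    have h1 := hbasis.isAlgebraic_field
    rwa [Subtype.range_coe] at h1
  -- F is finite over M
  obtain ⟨G, hG⟩ := (inferInstance : Algebra.FiniteType K B).out
  set T : Set F := algebraMap B F '' ↑G with hTdef
  haveI : Finite T := ((G.finite_toSet).image _).to_subtype
  have hTtop : IntermediateField.adjoin M T = ⊤ := by
    rw [eq_top_iff]
    rintro x -
    have hmem : ∀ b : B, algebraMap B F b ∈ IntermediateField.adjoin M T := by
      intro b
      have hb' : b ∈ Algebra.adjoin K (↑G : Set B) := hG ▸ Algebra.mem_top
      refine Algebra.adjoin_induction ?_ ?_ ?_ ?_ hb'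
      · intro g hg
        exact IntermediateField.subset_adjoin _ _ ⟨g, hg, rfl⟩
      · intro c
        have h2 : algebraMap B F (algebraMap K B c) = algebraMap M F (algebraMap K M c) := by
          rw [← IsScalarTower.algebraMap_apply, ← IsScalarTower.algebraMap_apply]
        rw [h2]
        exact (IntermediateField.adjoin M T).algebraMap_mem _
      · intro x y _ _ hx hy
        rw [map_add]; exact add_mem hx hy
      · intro x y _ _ hx hy
        rw [map_mul]; exact mul_mem hx hy
    obtain ⟨a, b, hb, hx⟩ := IsFractionRing.div_surjective (A := B) x
    rw [← hx]
    exact div_mem (hmem a) (hmem b)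
  haveI hFD : FiniteDimensional M F := by
    have h1 : FiniteDimensional M (IntermediateField.adjoin M T) :=
      IntermediateField.finiteDimensional_adjoin
        (fun x _ => ((halgMF.isAlgebraic x).isIntegral))
    rw [hTtop] at h1
    exact Module.Finite.equiv IntermediateField.topEquiv.toLinearEquiv
  set vM : M := ⟨v, IntermediateField.subset_adjoin K S hvmem⟩ with hvMdef
  -- no p-th roots of v inside M
  have hMv : ∀ p : ℕ, 2 ≤ p → ∀ c : M, c ^ p ≠ vM := by
    intro p hp2 c hc
    obtain ⟨r, s, hrs⟩ := (IntermediateField.mem_adjoin_iff K ((c : F))).mp c.2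
    have hcF : (c : F) ^ p = v := by
      have := congrArg (Subtype.val : M → F) hc
      push_cast at this
      exact this
    have hinj : Function.Injective
        (MvPolynomial.aeval (Subtype.val : S → F) : MvPolynomial S K →ₐ[K] F) := hbasis.1
    have hs0 : MvPolynomial.aeval (Subtype.val : S → F) s ≠ 0 := by
      intro h0
      apply hv0
      rw [← hcF, hrs, h0, div_zero, zero_pow (by omega)]
    rw [hrs, div_pow, div_eq_iff (pow_ne_zero _ hs0)] at hcF
    have key : MvPolynomial.aeval (Subtype.val : S → F) (r ^ p)
        = MvPolynomial.aeval (Subtype.val : S → F)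
          (MvPolynomial.X (⟨v, hvmem⟩ : S) * s ^ p) := by
      rw [map_mul, map_pow, map_pow, MvPolynomial.aeval_X]
      exact hcF
    have heq := hinj key
    have hsne : s ≠ 0 := by
      intro h0
      rw [h0, map_zero] at hs0
      exact hs0 rfl
    exact no_pth_root_of_prime_mul (mvPolynomial_prime_X _) hsne hp2 heq
  -- choose a large prime p
  obtain ⟨p, hpm, hp⟩ := Nat.exists_infinite_primes (Module.finrank M F + 1)
  have hp2 : 2 ≤ p := hp.two_le
  -- no p-th roots of v in F
  have hFv : ∀ b : F, b ^ p ≠ v := by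
    intro b hb
    have hirr : Irreducible (X ^ p - C vM : Polynomial M) :=
      X_pow_sub_C_irreducible_of_prime hp (hMv p hp2)
    have haev : aeval b (X ^ p - C vM : Polynomial M) = 0 := by
      rw [map_sub, aeval_X_pow, aeval_C]
      have : algebraMap M F vM = v := rfl
      rw [this, hb, sub_self]
    have hmono : (X ^ p - C vM : Polynomial M).Monic :=
      monic_X_pow_sub_C _ (by omega : p ≠ 0)
    have hmin : minpoly M b = X ^ p - C vM :=
      (minpoly.eq_of_irreducible_of_monic hirr haev hmono).symm
    have hle : (minpoly M b).natDegree ≤ Module.finrank M F := minpoly.natDegree_le b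
    rw [hmin, natDegree_X_pow_sub_C] at hle
    omega
  -- the Kummer covering
  set hpoly : Polynomial B := X ^ p - C (u : B) with hpolydef
  have hmono : hpoly.Monic := monic_X_pow_sub_C _ (by omega : p ≠ 0)
  have hmap : hpoly.map (algebraMap B F) = X ^ p - C v := by
    rw [hpolydef, Polynomial.map_sub, Polynomial.map_pow, Polynomial.map_X, Polynomial.map_C]
  have hirrF : Irreducible (X ^ p - C v : Polynomial F) :=
    X_pow_sub_C_irreducible_of_prime hp hFv
  haveI : Fact (Irreducible (X ^ p - C v : Polynomial F)) := ⟨hirrF⟩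
  have hev : hpoly.eval₂
      ((algebraMap F (AdjoinRoot (X ^ p - C v : Polynomial F))).comp (algebraMap B F))
      (AdjoinRoot.root (X ^ p - C v : Polynomial F)) = 0 := by
    rw [← Polynomial.eval₂_map, hmap]
    have := AdjoinRoot.eval₂_root (X ^ p - C v : Polynomial F)
    rwa [← AdjoinRoot.algebraMap_eq] at this
  set φ := AdjoinRoot.lift
    ((algebraMap F (AdjoinRoot (X ^ p - C v : Polynomial F))).comp (algebraMap B F))
    (AdjoinRoot.root (X ^ p - C v : Polynomial F)) hev with hφdef
  have hφinj : Function.Injective φ := by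
    rw [injective_iff_map_eq_zero]
    intro x hx
    obtain ⟨g, rfl⟩ := AdjoinRoot.mk_surjective x
    rw [hφdef, AdjoinRoot.lift_mk] at hx
    rw [← Polynomial.eval₂_map] at hx
    have hx' : AdjoinRoot.mk (X ^ p - C v : Polynomial F) (g.map (algebraMap B F)) = 0 := by
      rw [← AdjoinRoot.aeval_eq, Polynomial.aeval_def]
      exact hx
    rw [AdjoinRoot.mk_eq_zero, ← hmap, Polynomial.map_dvd_map _ hBF hmono] at hx'
    exact AdjoinRoot.mk_eq_zero.mpr hx'
  haveI hdom : IsDomain (AdjoinRoot hpoly) := Function.Injective.isDomain φ hφinj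
  haveI hfin : Module.Finite B (AdjoinRoot hpoly) :=
    Module.Finite.of_basis (AdjoinRoot.powerBasis' hmono).basis
  have hder : IsUnit (aeval (AdjoinRoot.root hpoly) (derivative hpoly)) := by
    have h1 : derivative hpoly = C ((p : B)) * X ^ (p - 1) := by
      rw [hpolydef, derivative_sub, derivative_C, sub_zero, derivative_X_pow]
    rw [h1, map_mul, aeval_C, map_pow, aeval_X]
    apply IsUnit.mul
    · have hK : IsUnit ((p : K)) := isUnit_iff_ne_zero.mpr (Nat.cast_ne_zero.mpr hp.ne_zero)
      have h2 := (hK.map (algebraMap K B)).map (algebraMap B (AdjoinRoot hpoly))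
      simpa using h2
    · have h0 : aeval (AdjoinRoot.root hpoly) hpoly = 0 := by
        rw [AdjoinRoot.aeval_eq, AdjoinRoot.mk_self]
      rw [hpolydef, map_sub, aeval_X_pow, aeval_C] at h0
      have hroot : (AdjoinRoot.root hpoly) ^ p = algebraMap B (AdjoinRoot hpoly) (u : B) :=
        sub_eq_zero.mp h0
      have hu2 : IsUnit ((AdjoinRoot.root hpoly) ^ p) :=
        hroot ▸ (u.isUnit.map (algebraMap B (AdjoinRoot hpoly)))
      have hru : IsUnit (AdjoinRoot.root hpoly) := by
        apply isUnit_of_mul_isUnit_left (y := (AdjoinRoot.root hpoly) ^ (p - 1))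
        have h3 : AdjoinRoot.root hpoly * (AdjoinRoot.root hpoly) ^ (p - 1)
            = (AdjoinRoot.root hpoly) ^ p := by
          rw [← pow_succ']
          congr 1
          omega
        rwa [h3]
      exact hru.pow _
  haveI := formallyEtale_adjoinRoot hpoly hder
  exact ⟨p, hp2, u, hdom, hfin, inferInstance, inferInstance⟩
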